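/- Let U ⊆ ℝ^{d₁} and V ⊆ ℝ^{d₂} be convex sets, let ‖·‖_U, ‖·‖_V be norms on ℝ^{d₁}, ℝ^{d₂} with dual norms ‖·‖_U*, ‖·‖_V*, and let D_U, D_V > 0. Let φ : U × V → ℝ be differentiable and suppose there are constants L₁₁, L₁₂, L₂₁, L₂₂ ≥ 0 such that for all u, u' ∈ U and v, v' ∈ V: ‖∇_u φ(u,v) − ∇_u φ(u',v)‖_U* ≤ L₁₁‖u−u'‖_U, ‖∇_u φ(u,v) − ∇_u φ(u,v')‖_U* ≤ L₁₂‖v−v'‖_V, ‖∇_v φ(u,v) − ∇_v φ(u,v')‖_V* ≤ L₂₂‖v−v'‖_V, and ‖∇_v φ(u,v) − ∇_v φ(u',v)‖_V* ≤ L₂₁‖u−u'‖_U. Define F(x) := (∇_u φ(u,v), −∇_v φ(u,v)) for x = (u,v) ∈ U × V, the norm ‖(u,v)‖_K := √( ‖u‖_U²/D_U² + ‖v‖_V²/D_V² ), and the dual quantity ‖(g,h)‖_K* := √( D_U²(‖g‖_U*)² + D_V²(‖h‖_V*)² ). Then for all x, x' ∈ U × V: ‖F(x) − F(x')‖_K*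 ≤ L ‖x − x'‖_K, where L := 2 max{ L₁₁ D_U², L₂₂ D_V², L₁₂ D_U D_V, L₂₁ D_U D_V }. -/

import Mathlib

/-- The standard dot product on `ℝ^d`. -/
noncomputable def dot {d : ℕ} (g x : Fin d → ℝ) : ℝ := ∑ i, g i * x i

/-- The dual norm `‖g‖_* = sup_{‖x‖ ≤ 1} g·x` of a norm `nrm` on `ℝ^d`. -/
noncomputable def dualNorm {d : ℕ} (nrm : (Fin d → ℝ) → ℝ) (g : Fin d → ℝ) : ℝ :=
  sSup ((fun x => dot g x) '' {x | nrm x ≤ 1})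

/-- The partial gradient of `φ(u,v)` w.r.t. the first block of variables, as a vector. -/
noncomputable def gradFst {d₁ d₂ : ℕ} (φ : (Fin d₁ → ℝ) → (Fin d₂ → ℝ) → ℝ)
    (u : Fin d₁ → ℝ) (v : Fin d₂ → ℝ) : Fin d₁ → ℝ :=
  fun i => fderiv ℝ (fun u' => φ u' v) u (Pi.single i 1)

/-- The partial gradient of `φ(u,v)` w.r.t. the second block of variables, as a vector. -/
noncomputable def gradSnd {d₁ d₂ : ℕ} (φ : (Fin d₁ → ℝ) → (Fin d₂ → ℝ) → ℝ)
    (u : Fin d₁ → ℝ) (v : Fin d₂ → ℝ) : Fin d₂ → ℝ :=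
  fun j => fderiv ℝ (fun v' => φ u v') v (Pi.single j 1)

/-- Smoothness of the saddle-point operator
`F(u,v) = (∇_u φ(u,v), −∇_v φ(u,v))` w.r.t. the combined norms:
`‖F(x) − F(x')‖_K* ≤ L‖x − x'‖_K` with
`L = 2 max{L₁₁D_U², L₂₂D_V², L₁₂D_U D_V, L₂₁D_U D_V}`. -/
lemma n_sum_le {d : ℕ} (n : (Fin d → ℝ) → ℝ) (hn0 : n 0 = 0)
    (htri : ∀ z w, n (z + w) ≤ n z + n w) {ι : Type*} (s : Finset ι)
    (f : ι → (Fin d → ℝ)) : n (∑ i ∈ s, f i) ≤ ∑ i ∈ s, n (f i) := by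
  classical
  induction s using Finset.induction_on with
  | empty => simp [hn0]
  | insert _ _ h ih =>
    rw [Finset.sum_insert h, Finset.sum_insert h]
    exact le_trans (htri _ _) (by linarith)

lemma exists_norm_lower {d : ℕ} (n : (Fin d → ℝ) → ℝ)
    (h0 : ∀ z, 0 ≤ n z) (hdef : ∀ z, n z = 0 ↔ z = 0)
    (hsmul : ∀ (c : ℝ) z, n (c • z) = |c| * n z)
    (htri : ∀ z w, n (z + w) ≤ n z + n w) :
    ∃ m : ℝ, 0 < m ∧ ∀ x, m * ‖x‖ ≤ n x := by
  have hn0 : n 0 = 0 := (hdef 0).mpr rfl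
  rcases subsingleton_or_nontrivial (Fin d → ℝ) with hs | hs
  · refine ⟨1, one_pos, fun x => ?_⟩
    rw [Subsingleton.elim x 0]
    simp [hn0]
  -- upper bound: n is Lipschitz wrt sup norm
  set C : ℝ := ∑ i, n (Pi.single i 1) with hC
  have hCub : ∀ z, n z ≤ C * ‖z‖ := by
    intro z
    have hz : z = ∑ i, Pi.single i (z i) := (Finset.univ_sum_single z).symm
    calc n z = n (∑ i, Pi.single i (z i)) := by rw [← hz]
      _ ≤ ∑ i, n (Pi.single i (z i)) := n_sum_le n hn0 htri _ _
      _ ≤ ∑ i, ‖z‖ * n (Pi.single i 1) := by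
          refine Finset.sum_le_sum fun i _ => ?_
          have : Pi.single i (z i) = z i • (Pi.single i 1 : Fin d → ℝ) := by
            funext j
            simp [Pi.single_apply, mul_ite]
          rw [this, hsmul]
          have h1 : |z i| ≤ ‖z‖ := by
            simpa using norm_le_pi_norm z i
          exact mul_le_mul_of_nonneg_right h1 (h0 _)
      _ = C * ‖z‖ := by rw [← Finset.mul_sum, mul_comm]
  have hnd : ∀ x y, n x - n y ≤ n (x - y) := by
    intro x y
    have := htri (x - y) y
    simpa using this
  have hsymm : ∀ x y, n (x - y) = n (y - x) := by
    intro x y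
    have := hsmul (-1) (y - x)
    simpa [neg_sub] using this
  have hcont : Continuous n := by
    have hC0 : 0 ≤ C := Finset.sum_nonneg fun i _ => h0 _
    refine (LipschitzWith.of_dist_le_mul (K := C.toNNReal) (f := n) ?_).continuous
    intro x y
    rw [Real.dist_eq, dist_eq_norm, Real.coe_toNNReal C hC0]
    rw [abs_sub_le_iff]
    constructor
    · exact le_trans (hnd x y) (hCub _)
    · refine le_trans (hnd y x) ?_
      rw [hsymm y x]
      exact hCub _
  have hne : (Metric.sphere (0 : Fin d → ℝ) 1).Nonempty :=
    NormedSpace.sphere_nonempty.mpr zero_le_one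
  obtain ⟨x₀, hx₀, hmin⟩ :=
    (isCompact_sphere (0 : Fin d → ℝ) 1).exists_isMinOn hne hcont.continuousOn
  have hx₀n : ‖x₀‖ = 1 := by simpa using mem_sphere_zero_iff_norm.mp hx₀
  have hx₀0 : x₀ ≠ 0 := by
    intro h
    rw [h] at hx₀n
    simp at hx₀n
  have hm : 0 < n x₀ := lt_of_le_of_ne (h0 x₀) fun h => hx₀0 ((hdef x₀).mp h.symm)
  refine ⟨n x₀, hm, fun x => ?_⟩
  by_cases hx : x = 0
  · simp [hx, hn0]
  · have hxn : 0 < ‖x‖ := norm_pos_iff.mpr hx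
    have hy : (‖x‖⁻¹ • x) ∈ Metric.sphere (0 : Fin d → ℝ) 1 := by
      rw [mem_sphere_zero_iff_norm, norm_smul, norm_inv, norm_norm,
        inv_mul_cancel₀ hxn.ne']
    have h2 : n x₀ ≤ n (‖x‖⁻¹ • x) := hmin hy
    rw [hsmul, abs_of_nonneg (inv_nonneg.mpr hxn.le)] at h2
    calc n x₀ * ‖x‖ ≤ (‖x‖⁻¹ * n x) * ‖x‖ :=
          mul_le_mul_of_nonneg_right h2 hxn.le
      _ = n x := by field_simp

lemma dualNorm_bddAbove {d : ℕ} (n : (Fin d → ℝ) → ℝ) (m : ℝ) (hm : 0 < m)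
    (hlow : ∀ x, m * ‖x‖ ≤ n x) (g : Fin d → ℝ) :
    BddAbove ((fun x => dot g x) '' {x | n x ≤ 1}) := by
  refine ⟨(∑ i, |g i|) / m, ?_⟩
  rintro y ⟨x, hx, rfl⟩
  have hxn : ‖x‖ ≤ 1 / m := by
    rw [le_div_iff₀ hm, mul_comm]
    exact le_trans (hlow x) hx
  calc dot g x ≤ ∑ i, |g i| * ‖x‖ := by
        refine Finset.sum_le_sum fun i _ => ?_
        calc g i * x i ≤ |g i * x i| := le_abs_self _
          _ = |g i| * |x i| := abs_mul _ _
          _ ≤ |g i| * ‖x‖ := by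
              refine mul_le_mul_of_nonneg_left ?_ (abs_nonneg _)
              simpa using norm_le_pi_norm x i
    _ = (∑ i, |g i|) * ‖x‖ := by rw [Finset.sum_mul]
    _ ≤ (∑ i, |g i|) * (1 / m) := by
        refine mul_le_mul_of_nonneg_left hxn (Finset.sum_nonneg fun i _ => abs_nonneg _)
    _ = (∑ i, |g i|) / m := by ring

lemma dualNorm_nonneg {d : ℕ} (n : (Fin d → ℝ) → ℝ) (hn0 : n 0 = 0) (m : ℝ) (hm : 0 < m)
    (hlow : ∀ x, m * ‖x‖ ≤ n x) (g : Fin d → ℝ) : 0 ≤ dualNorm n g := by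
  have h0mem : (0 : ℝ) ∈ (fun x => dot g x) '' {x | n x ≤ 1} :=
    ⟨0, by simp [hn0], by simp [dot]⟩
  exact le_csSup (dualNorm_bddAbove n m hm hlow g) h0mem

lemma dualNorm_add_le {d : ℕ} (n : (Fin d → ℝ) → ℝ) (hn0 : n 0 = 0) (m : ℝ) (hm : 0 < m)
    (hlow : ∀ x, m * ‖x‖ ≤ n x) (g h : Fin d → ℝ) :
    dualNorm n (g + h) ≤ dualNorm n g + dualNorm n h := by
  refine csSup_le ⟨0, 0, by simp [hn0], by simp [dot]⟩ ?_
  rintro y ⟨x, hx, rfl⟩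
  have h1 : dot g x ≤ dualNorm n g :=
    le_csSup (dualNorm_bddAbove n m hm hlow g) ⟨x, hx, rfl⟩
  have h2 : dot h x ≤ dualNorm n h :=
    le_csSup (dualNorm_bddAbove n m hm hlow h) ⟨x, hx, rfl⟩
  have : dot (g + h) x = dot g x + dot h x := by
    simp [dot, add_mul, Finset.sum_add_distrib]
  show dot (g + h) x ≤ _
  rw [this]
  exact add_le_add h1 h2

lemma numeric_step (A B s t M DU DV : ℝ) (hDU : 0 < DU) (hDV : 0 < DV)
    (hA0 : 0 ≤ A) (hB0 : 0 ≤ B) (hs0 : 0 ≤ s) (ht0 : 0 ≤ t) (hM0 : 0 ≤ M)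
    (h1 : DU * A ≤ M * s + M * t) (h2 : DV * B ≤ M * s + M * t) :
    Real.sqrt (DU ^ 2 * A ^ 2 + DV ^ 2 * B ^ 2) ≤
      (2 * M) * Real.sqrt (s ^ 2 + t ^ 2) := by
  have h3 : (DU * A) ^ 2 ≤ (M * s + M * t) ^ 2 :=
    pow_le_pow_left₀ (by positivity) h1 2
  have h4 : (DV * B) ^ 2 ≤ (M * s + M * t) ^ 2 :=
    pow_le_pow_left₀ (by positivity) h2 2
  have key : DU ^ 2 * A ^ 2 + DV ^ 2 * B ^ 2 ≤ (2 * M) ^ 2 * (s ^ 2 + t ^ 2) := by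
    nlinarith [mul_nonneg (mul_nonneg hM0 hM0) (sq_nonneg (s - t))]
  calc Real.sqrt (DU ^ 2 * A ^ 2 + DV ^ 2 * B ^ 2)
      ≤ Real.sqrt ((2 * M) ^ 2 * (s ^ 2 + t ^ 2)) := Real.sqrt_le_sqrt key
    _ = (2 * M) * Real.sqrt (s ^ 2 + t ^ 2) := by
        rw [Real.sqrt_mul (sq_nonneg _), Real.sqrt_sq (by positivity)]

theorem saddle_operator_smooth {d₁ d₂ : ℕ}
    (U : Set (Fin d₁ → ℝ)) (V : Set (Fin d₂ → ℝ))
    (hU : Convex ℝ U) (hV : Convex ℝ V)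
    (nU : (Fin d₁ → ℝ) → ℝ)
    (hnU0 : ∀ z, 0 ≤ nU z) (hnUdef : ∀ z, nU z = 0 ↔ z = 0)
    (hnUsmul : ∀ (c : ℝ) z, nU (c • z) = |c| * nU z)
    (hnUtri : ∀ z w, nU (z + w) ≤ nU z + nU w)
    (nV : (Fin d₂ → ℝ) → ℝ)
    (hnV0 : ∀ z, 0 ≤ nV z) (hnVdef : ∀ z, nV z = 0 ↔ z = 0)
    (hnVsmul : ∀ (c : ℝ) z, nV (c • z) = |c| * nV z)
    (hnVtri : ∀ z w, nV (z + w) ≤ nV z + nV w)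
    (DU DV : ℝ) (hDU : 0 < DU) (hDV : 0 < DV)
    (φ : (Fin d₁ → ℝ) → (Fin d₂ → ℝ) → ℝ)
    (hφu : ∀ v, Differentiable ℝ (fun u => φ u v))
    (hφv : ∀ u, Differentiable ℝ (fun v => φ u v))
    (L₁₁ L₁₂ L₂₁ L₂₂ : ℝ)
    (hL₁₁0 : 0 ≤ L₁₁) (hL₁₂0 : 0 ≤ L₁₂) (hL₂₁0 : 0 ≤ L₂₁) (hL₂₂0 : 0 ≤ L₂₂)
    (h11 : ∀ u ∈ U, ∀ u' ∈ U, ∀ v ∈ V,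
      dualNorm nU (gradFst φ u v - gradFst φ u' v) ≤ L₁₁ * nU (u - u'))
    (h12 : ∀ u ∈ U, ∀ v ∈ V, ∀ v' ∈ V,
      dualNorm nU (gradFst φ u v - gradFst φ u v') ≤ L₁₂ * nV (v - v'))
    (h22 : ∀ u ∈ U, ∀ v ∈ V, ∀ v' ∈ V,
      dualNorm nV (gradSnd φ u v - gradSnd φ u v') ≤ L₂₂ * nV (v - v'))
    (h21 : ∀ u ∈ U, ∀ u' ∈ U, ∀ v ∈ V,
      dualNorm nV (gradSnd φ u v - gradSnd φ u' v) ≤ L₂₁ * nU (u - u')) :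
    ∀ u ∈ U, ∀ u' ∈ U, ∀ v ∈ V, ∀ v' ∈ V,
      Real.sqrt (DU ^ 2 * (dualNorm nU (gradFst φ u v - gradFst φ u' v')) ^ 2 +
          DV ^ 2 * (dualNorm nV ((-gradSnd φ u v) - (-gradSnd φ u' v'))) ^ 2) ≤
        (2 * max (max (L₁₁ * DU ^ 2) (L₂₂ * DV ^ 2))
            (max (L₁₂ * DU * DV) (L₂₁ * DU * DV))) *
          Real.sqrt ((nU (u - u')) ^ 2 / DU ^ 2 + (nV (v - v')) ^ 2 / DV ^ 2) := by
  intro u hu u' hu' v hv v' hv'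
  obtain ⟨mU, hmU, hlowU⟩ := exists_norm_lower nU hnU0 hnUdef hnUsmul hnUtri
  obtain ⟨mV, hmV, hlowV⟩ := exists_norm_lower nV hnV0 hnVdef hnVsmul hnVtri
  have hnU00 : nU 0 = 0 := (hnUdef 0).mpr rfl
  have hnV00 : nV 0 = 0 := (hnVdef 0).mpr rfl
  have hsymmU : ∀ z w, nU (z - w) = nU (w - z) := by
    intro z w
    have := hnUsmul (-1) (w - z)
    simpa [neg_sub] using this
  have hsymmV : ∀ z w, nV (z - w) = nV (w - z) := by
    intro z w
    have := hnVsmul (-1) (w - z)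
    simpa [neg_sub] using this
  have ha0 : 0 ≤ nU (u - u') := hnU0 _
  have hb0 : 0 ≤ nV (v - v') := hnV0 _
  have hA0 : 0 ≤ dualNorm nU (gradFst φ u v - gradFst φ u' v') :=
    dualNorm_nonneg nU hnU00 mU hmU hlowU _
  have hB0 : 0 ≤ dualNorm nV ((-gradSnd φ u v) - (-gradSnd φ u' v')) :=
    dualNorm_nonneg nV hnV00 mV hmV hlowV _
  have hAle : dualNorm nU (gradFst φ u v - gradFst φ u' v') ≤
      L₁₁ * nU (u - u') + L₁₂ * nV (v - v') := by
    have hsplit : gradFst φ u v - gradFst φ u' v' =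
        (gradFst φ u v - gradFst φ u' v) + (gradFst φ u' v - gradFst φ u' v') :=
      (sub_add_sub_cancel _ _ _).symm
    rw [hsplit]
    exact le_trans (dualNorm_add_le nU hnU00 mU hmU hlowU _ _)
      (add_le_add (h11 u hu u' hu' v hv) (h12 u' hu' v hv v' hv'))
  have hBle : dualNorm nV ((-gradSnd φ u v) - (-gradSnd φ u' v')) ≤
      L₂₁ * nU (u - u') + L₂₂ * nV (v - v') := by
    have hneg : (-gradSnd φ u v) - (-gradSnd φ u' v') =
        gradSnd φ u' v' - gradSnd φ u v := neg_sub_neg _ _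
    have hsplit : gradSnd φ u' v' - gradSnd φ u v =
        (gradSnd φ u' v - gradSnd φ u v) + (gradSnd φ u' v' - gradSnd φ u' v) :=
      (sub_add_sub_cancel' _ _ _).symm
    have h1 : dualNorm nV (gradSnd φ u' v - gradSnd φ u v) ≤ L₂₁ * nU (u - u') := by
      have := h21 u' hu' u hu v hv
      rwa [hsymmU u' u] at this
    have h2 : dualNorm nV (gradSnd φ u' v' - gradSnd φ u' v) ≤ L₂₂ * nV (v - v') := by
      have := h22 u' hu' v' hv' v hv
      rwa [hsymmV v' v] at this
    rw [hneg, hsplit]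
    exact le_trans (dualNorm_add_le nV hnV00 mV hmV hlowV _ _) (add_le_add h1 h2)
  obtain ⟨A, hA⟩ : ∃ A, A = dualNorm nU (gradFst φ u v - gradFst φ u' v') := ⟨_, rfl⟩
  obtain ⟨B, hB⟩ : ∃ B, B = dualNorm nV ((-gradSnd φ u v) - (-gradSnd φ u' v')) :=
    ⟨_, rfl⟩
  obtain ⟨a, ha⟩ : ∃ a, a = nU (u - u') := ⟨_, rfl⟩
  obtain ⟨b, hb⟩ : ∃ b, b = nV (v - v') := ⟨_, rfl⟩
  obtain ⟨M, hM⟩ : ∃ M, M = max (max (L₁₁ * DU ^ 2) (L₂₂ * DV ^ 2))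
      (max (L₁₂ * DU * DV) (L₂₁ * DU * DV)) := ⟨_, rfl⟩
  rw [← hA, ← hB, ← ha, ← hb, ← hM]
  rw [← hA] at hA0 hAle
  rw [← hB] at hB0 hBle
  rw [← ha] at ha0 hAle hBle
  rw [← hb] at hb0 hAle hBle
  have hM1 : L₁₁ * DU ^ 2 ≤ M := hM ▸ le_max_of_le_left (le_max_left _ _)
  have hM2 : L₂₂ * DV ^ 2 ≤ M := hM ▸ le_max_of_le_left (le_max_right _ _)
  have hM3 : L₁₂ * DU * DV ≤ M := hM ▸ le_max_of_le_right (le_max_left _ _)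
  have hM4 : L₂₁ * DU * DV ≤ M := hM ▸ le_max_of_le_right (le_max_right _ _)
  have hM0 : 0 ≤ M := le_trans (by positivity) hM1
  have hs0 : 0 ≤ a / DU := div_nonneg ha0 hDU.le
  have ht0 : 0 ≤ b / DV := div_nonneg hb0 hDV.le
  have h1 : DU * A ≤ M * (a / DU) + M * (b / DV) := by
    have h1a := mul_le_mul_of_nonneg_left hAle hDU.le
    have e1 : DU * (L₁₁ * a + L₁₂ * b) =
        (L₁₁ * DU ^ 2) * (a / DU) + (L₁₂ * DU * DV) * (b / DV) := by
      field_simp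
    rw [e1] at h1a
    exact le_trans h1a (add_le_add (mul_le_mul_of_nonneg_right hM1 hs0)
      (mul_le_mul_of_nonneg_right hM3 ht0))
  have h2 : DV * B ≤ M * (a / DU) + M * (b / DV) := by
    have h2a := mul_le_mul_of_nonneg_left hBle hDV.le
    have e2 : DV * (L₂₁ * a + L₂₂ * b) =
        (L₂₁ * DU * DV) * (a / DU) + (L₂₂ * DV ^ 2) * (b / DV) := by
      field_simp
    rw [e2] at h2a
    exact le_trans h2a (add_le_add (mul_le_mul_of_nonneg_right hM4 hs0)
      (mul_le_mul_of_nonneg_right hM2 ht0))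
  have hrw : a ^ 2 / DU ^ 2 + b ^ 2 / DV ^ 2 = (a / DU) ^ 2 + (b / DV) ^ 2 := by
    rw [div_pow, div_pow]
  rw [hrw]
  exact numeric_step A B (a / DU) (b / DV) M DU DV hDU hDV hA0 hB0 hs0 ht0 hM0 h1 h2
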